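/- arXiv:2307.12048 — 2 statements merged into one kernel-verified Lean document; each statement's English description precedes it below -/
import Mathlib

section
/- Let p : (0,∞) × X × X → [0,∞) satisfy the sub-Markov property ∫ p(s,x,y) dμ(y) ≤ 1. Suppose A ⊆ X is measurable and there exist T ∈ (0,∞], measurable φ₁ : (0,T) → [0,∞) and φ₂ : A → [0,∞) such that p(t,x,y) ≤ φ₁(t)·φ₂(y) for all 0 < t < T and x, y ∈ A. Then for q ∈ (1,∞), all measurable w and 0 < t < T: sup_{x∈A} ∫_0^t ∫_A p(s,x,y)|w(y)| dμ(y) ds ≤ (∫_0^t φ₁(s)^{1/q} ds) · (∫_A |w(y)|^q φ₂(y) dμ(y))^{1/q}. -/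
open MeasureTheory ENNReal Set Filter

/-- Hölder-type bound for the localized Dynkin norm under a product
upper bound `p(t,x,y) ≤ φ₁(t) φ₂(y)` on a set `A`. -/
theorem dynkin_norm_holder_bound
    {X : Type*} [MeasurableSpace X] (μ : Measure X)
    (p : ℝ → X → X → ℝ≥0∞)
    (hmeas : ∀ s > (0:ℝ), Measurable (Function.uncurry (p s)))
    (hsub : ∀ s > (0:ℝ), ∀ x : X, ∫⁻ y, p s x y ∂μ ≤ 1)
    (A : Set X) (hA : MeasurableSet A)
    (T : ℝ≥0∞) (hT : 0 < T)
    (φ₁ : ℝ → ℝ≥0∞) (hφ₁ : Measurable φ₁)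
    (φ₂ : X → ℝ≥0∞) (hφ₂ : Measurable φ₂)
    (hbound : ∀ t : ℝ, 0 < t → (ENNReal.ofReal t) < T → ∀ x ∈ A, ∀ y ∈ A, p t x y ≤ φ₁ t * φ₂ y)
    (q : ℝ) (hq : 1 < q)
    (w : X → ℝ) (hw : Measurable w)
    (t : ℝ) (ht : 0 < t) (htT : (ENNReal.ofReal t) < T) :
    (⨆ x ∈ A, ∫⁻ s in Ioc (0:ℝ) t, ∫⁻ y in A, p s x y * ENNReal.ofReal |w y| ∂μ)
      ≤ (∫⁻ s in Ioc (0:ℝ) t, (φ₁ s) ^ (1/q)) *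
        (∫⁻ y in A, (ENNReal.ofReal |w y|) ^ q * φ₂ y ∂μ) ^ (1/q) := by
  have hq0 : (0:ℝ) < q := lt_trans one_pos hq
  set q' : ℝ := Real.conjExponent q with hq'def
  have hq' : q'.HolderConjugate q := (Real.HolderConjugate.conjExponent hq).symm
  set I := ∫⁻ y in A, (ENNReal.ofReal |w y|) ^ q * φ₂ y ∂μ with hI
  refine iSup₂_le fun x hx => ?_
  have key : ∀ s ∈ Ioc (0:ℝ) t,
      (∫⁻ y in A, p s x y * ENNReal.ofReal |w y| ∂μ) ≤ φ₁ s ^ (1/q) * I ^ (1/q) := by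
    intro s hs
    have hs0 : 0 < s := hs.1
    have hsT : ENNReal.ofReal s < T := lt_of_le_of_lt (ENNReal.ofReal_le_ofReal hs.2) htT
    have hm : Measurable (p s x) := (hmeas s hs0).comp measurable_prodMk_left
    set f : X → ℝ≥0∞ := fun y => p s x y ^ (1/q') with hf
    set g : X → ℝ≥0∞ := fun y => p s x y ^ (1/q) * ENNReal.ofReal |w y| with hg
    have hfm : Measurable f := hm.pow_const _
    have hwm : Measurable fun y => ENNReal.ofReal |w y| := hw.abs.ennreal_ofReal
    have hgm : Measurable g := (hm.pow_const _).mul hwm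
    have hfg : ∀ y, p s x y * ENNReal.ofReal |w y| = f y * g y := by
      intro y
      have : p s x y ^ (1/q') * p s x y ^ (1/q) = p s x y := by
        rw [← ENNReal.rpow_add_of_nonneg _ _ (le_of_lt hq'.one_div_pos)
          (le_of_lt hq'.symm.one_div_pos)]
        rw [one_div, one_div, hq'.inv_add_inv_eq_one, ENNReal.rpow_one]
      simp only [hf, hg, ← mul_assoc, this]
    have holder := ENNReal.lintegral_mul_le_Lp_mul_Lq (μ.restrict A) hq'
      hfm.aemeasurable hgm.aemeasurable
    have hfint : (∫⁻ y in A, f y ^ q' ∂μ) ^ (1/q') ≤ 1 := by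
      have h1 : ∀ y, f y ^ q' = p s x y := by
        intro y
        simp only [hf]
        rw [← ENNReal.rpow_mul, one_div, inv_mul_cancel₀ hq'.ne_zero, ENNReal.rpow_one]
      simp only [h1]
      have h2 : (∫⁻ y in A, p s x y ∂μ) ≤ 1 :=
        le_trans (setLIntegral_le_lintegral _ _) (hsub s hs0 x)
      exact ENNReal.rpow_le_one h2 (le_of_lt hq'.one_div_pos)
    have hgint : (∫⁻ y in A, g y ^ q ∂μ) ^ (1/q) ≤ φ₁ s ^ (1/q) * I ^ (1/q) := by
      have h1 : ∀ y, g y ^ q = p s x y * (ENNReal.ofReal |w y|) ^ q := by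
        intro y
        simp only [hg]
        rw [ENNReal.mul_rpow_of_nonneg _ _ (le_of_lt hq0), ← ENNReal.rpow_mul,
          one_div, inv_mul_cancel₀ (ne_of_gt hq0), ENNReal.rpow_one]
      have h2 : (∫⁻ y in A, g y ^ q ∂μ) ≤ φ₁ s * I := by
        simp only [h1]
        calc (∫⁻ y in A, p s x y * (ENNReal.ofReal |w y|) ^ q ∂μ)
            ≤ ∫⁻ y in A, (φ₁ s * φ₂ y) * (ENNReal.ofReal |w y|) ^ q ∂μ := by
              refine setLIntegral_mono ((hφ₂.const_mul _).mul (hwm.pow_const _)) fun y hy => ?_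
              exact mul_le_mul_left (hbound s hs0 hsT x hx y hy) _
          _ = φ₁ s * I := by
              rw [hI, ← lintegral_const_mul (f := fun y => ENNReal.ofReal |w y| ^ q * φ₂ y) _ ((hwm.pow_const _).mul hφ₂)]
              congr 1; ext y; ring
        done
      calc (∫⁻ y in A, g y ^ q ∂μ) ^ (1/q) ≤ (φ₁ s * I) ^ (1/q) :=
            ENNReal.rpow_le_rpow h2 (le_of_lt hq'.symm.one_div_pos)
        _ = φ₁ s ^ (1/q) * I ^ (1/q) :=
            ENNReal.mul_rpow_of_nonneg _ _ (le_of_lt hq'.symm.one_div_pos)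
    calc (∫⁻ y in A, p s x y * ENNReal.ofReal |w y| ∂μ)
        = ∫⁻ y in A, f y * g y ∂μ := by simp only [hfg]
      _ ≤ (∫⁻ y in A, f y ^ q' ∂μ) ^ (1/q') * (∫⁻ y in A, g y ^ q ∂μ) ^ (1/q) := holder
      _ ≤ 1 * (φ₁ s ^ (1/q) * I ^ (1/q)) := mul_le_mul' hfint hgint
      _ = φ₁ s ^ (1/q) * I ^ (1/q) := one_mul _
  calc (∫⁻ s in Ioc (0:ℝ) t, ∫⁻ y in A, p s x y * ENNReal.ofReal |w y| ∂μ)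
      ≤ ∫⁻ s in Ioc (0:ℝ) t, φ₁ s ^ (1/q) * I ^ (1/q) :=
        setLIntegral_mono ((hφ₁.pow_const _).mul_const _) key
    _ = (∫⁻ s in Ioc (0:ℝ) t, φ₁ s ^ (1/q)) * I ^ (1/q) :=
        lintegral_mul_const _ (hφ₁.pow_const _)
end

section
/- Suppose a heat kernel satisfies the local Gaussian upper bound p(t,x,y) ≤ α m(x,√t)^{-1} e^{-β d(x,y)²/t} e^{γt} together with local N-volume doubling m(x,R) ≤ a e^{aR}(R/r)^N m(x,r). Then for all 0 < t < 1 and x, y: p(t,x,y) ≤ α a e^{a+γ} t^{-N/2} m(x,1)^{-1}. Consequently, for every q ∈ (N/2, ∞), every w ∈ L^q(X, φ·dm) with φ(x) := 1/m(x,1) lies in the Kato class: sup_x ∫_0^t ∫ p(s,x,y)|w(y)| dm(y) ds ≤ C ∫_0^t s^{-N/(2q)} ds · ‖w‖_{L^q_φ} → 0 as t → 0+. -/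
open MeasureTheory ENNReal Set Metric Filter Topology

/-- ENNReal inversion helper. -/
lemma aux_inv_le_of_le_mul {u v c : ℝ≥0∞} (hc0 : c ≠ 0) (hc : c ≠ ∞)
    (h : u ≤ c * v) : v⁻¹ ≤ c * u⁻¹ := by
  have h1 : (c * v)⁻¹ ≤ u⁻¹ := ENNReal.inv_le_inv.2 h
  have h2 : (c * v)⁻¹ = c⁻¹ * v⁻¹ := ENNReal.mul_inv (Or.inl hc0) (Or.inl hc)
  calc v⁻¹ = (c * c⁻¹) * v⁻¹ := by rw [ENNReal.mul_inv_cancel hc0 hc, one_mul]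
    _ = c * (c⁻¹ * v⁻¹) := by rw [mul_assoc]
    _ ≤ c * u⁻¹ := by
        refine mul_le_mul_right ?_ c
        rw [← h2]; exact h1

/-- a local Gaussian upper bound plus local `N`-volume doubling gives the
on-diagonal bound `p(t,x,y) ≤ α a e^{a+γ} t^{-N/2} m(x,1)⁻¹` for `0 < t < 1`, and
consequently every `w ∈ L^q(X, φ dm)` with `φ(x) = 1/m(x,1)` and `q > N/2` lies in the
Kato class. -/
theorem gue_vd_implies_kato
    {X : Type*} [PseudoMetricSpace X] [MeasurableSpace X] [OpensMeasurableSpace X]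
    (μ : Measure X)
    (p : ℝ → X → X → ℝ≥0∞)
    (hpmeas : ∀ s > (0:ℝ), Measurable (Function.uncurry (p s)))
    (hsub : ∀ s > (0:ℝ), ∀ x : X, ∫⁻ y, p s x y ∂μ ≤ 1)
    (α β γ a N q : ℝ)
    (hα : 0 < α) (hβ : 0 < β) (hγ : 0 < γ) (ha : 0 < a)
    (hN : 2 ≤ N) (hq : N/2 < q)
    (hGUE : ∀ t : ℝ, 0 < t → ∀ x y : X,
      p t x y ≤ ENNReal.ofReal α * (μ (ball x (Real.sqrt t)))⁻¹ *
        ENNReal.ofReal (Real.exp (-β * (dist x y)^2 / t) * Real.exp (γ * t)))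
    (hVD : ∀ x : X, ∀ r R : ℝ, 0 < r → r < R →
      μ (ball x R) ≤ ENNReal.ofReal (a * Real.exp (a * R) * (R / r) ^ N) * μ (ball x r)) :
    (∀ t : ℝ, 0 < t → t < 1 → ∀ x y : X,
      p t x y ≤ ENNReal.ofReal (α * a * Real.exp (a + γ) * t ^ (-(N/2))) * (μ (ball x 1))⁻¹) ∧
    (∃ C : ℝ≥0∞, C ≠ 0 ∧ C ≠ ∞ ∧
      ∀ w : X → ℝ, Measurable w → ∀ t : ℝ, 0 < t → t < 1 →
        (⨆ x : X, ∫⁻ s in Ioc (0:ℝ) t, ∫⁻ y, p s x y * ENNReal.ofReal |w y| ∂μ)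
          ≤ C * (∫⁻ s in Ioc (0:ℝ) t, ENNReal.ofReal (s ^ (-(N/(2*q))))) *
            (∫⁻ y, (ENNReal.ofReal |w y|) ^ q * (μ (ball y 1))⁻¹ ∂μ) ^ (1/q)) ∧
    (∀ w : X → ℝ, Measurable w →
      (∫⁻ y, (ENNReal.ofReal |w y|) ^ q * (μ (ball y 1))⁻¹ ∂μ) < ∞ →
      Tendsto (fun t => ⨆ x : X, ∫⁻ s in Ioc (0:ℝ) t, ∫⁻ y, p s x y * ENNReal.ofReal |w y| ∂μ)
        (𝓝[>] (0:ℝ)) (𝓝 0)) := by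
  have hN0 : (0:ℝ) < N := by linarith
  have hq0 : (0:ℝ) < q := by linarith
  have hq1 : (1:ℝ) < q := by linarith
  -- Part 1: on-diagonal bound
  have part1 : ∀ t : ℝ, 0 < t → t < 1 → ∀ x y : X,
      p t x y ≤ ENNReal.ofReal (α * a * Real.exp (a + γ) * t ^ (-(N/2))) *
        (μ (ball x 1))⁻¹ := by
    intro t ht0 ht1 x y
    have hst : 0 < Real.sqrt t := Real.sqrt_pos.2 ht0
    have hst1 : Real.sqrt t < 1 := by
      nlinarith [Real.sq_sqrt ht0.le, Real.sqrt_nonneg t]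
    -- sqrt t power identity
    have hpow : ((1 : ℝ) / Real.sqrt t) ^ N = t ^ (-(N/2)) := by
      rw [one_div, Real.sqrt_eq_rpow, ← Real.rpow_neg ht0.le,
        ← Real.rpow_mul ht0.le, show (-((1:ℝ)/2)) * N = -(N/2) by ring]
    have hVD1 := hVD x (Real.sqrt t) 1 hst hst1
    have hc0 : (0:ℝ) < a * Real.exp (a * 1) * (1 / Real.sqrt t) ^ N := by
      have := Real.rpow_pos_of_pos (by positivity : (0:ℝ) < 1 / Real.sqrt t) N
      positivity
    have hinv : (μ (ball x (Real.sqrt t)))⁻¹ ≤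
        ENNReal.ofReal (a * Real.exp (a * 1) * (1 / Real.sqrt t) ^ N) * (μ (ball x 1))⁻¹ :=
      aux_inv_le_of_le_mul (by simpa using ENNReal.ofReal_pos.2 hc0 |>.ne')
        ENNReal.ofReal_ne_top hVD1
    have hE : Real.exp (-β * (dist x y)^2 / t) * Real.exp (γ * t) ≤ Real.exp γ := by
      have h1 : Real.exp (-β * (dist x y)^2 / t) ≤ 1 := by
        rw [Real.exp_le_one_iff]
        have h0 : 0 ≤ β * (dist x y)^2 / t := by positivity
        have h0' : -β * (dist x y)^2 / t = -(β * (dist x y)^2 / t) := by ring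
        linarith
      have h2 : Real.exp (γ * t) ≤ Real.exp γ := by
        apply Real.exp_le_exp.2; nlinarith
      calc Real.exp (-β * (dist x y)^2 / t) * Real.exp (γ * t)
          ≤ 1 * Real.exp γ := by
            exact mul_le_mul h1 h2 (Real.exp_pos _).le zero_le_one
        _ = Real.exp γ := one_mul _
    calc p t x y ≤ ENNReal.ofReal α * (μ (ball x (Real.sqrt t)))⁻¹ *
          ENNReal.ofReal (Real.exp (-β * (dist x y)^2 / t) * Real.exp (γ * t)) :=
        hGUE t ht0 x y
      _ ≤ ENNReal.ofReal α *
          (ENNReal.ofReal (a * Real.exp (a * 1) * (1 / Real.sqrt t) ^ N) * (μ (ball x 1))⁻¹) *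
          ENNReal.ofReal (Real.exp γ) := by
            exact mul_le_mul' (mul_le_mul' le_rfl hinv) (ENNReal.ofReal_le_ofReal hE)
      _ = (ENNReal.ofReal α *
          ENNReal.ofReal (a * Real.exp (a * 1) * (1 / Real.sqrt t) ^ N) *
          ENNReal.ofReal (Real.exp γ)) * (μ (ball x 1))⁻¹ := by ring
      _ = ENNReal.ofReal (α * (a * Real.exp (a * 1) * (1 / Real.sqrt t) ^ N) * Real.exp γ) *
            (μ (ball x 1))⁻¹ := by
          rw [← ENNReal.ofReal_mul hα.le, ← ENNReal.ofReal_mul (by positivity)]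
      _ = ENNReal.ofReal (α * a * Real.exp (a + γ) * t ^ (-(N/2))) * (μ (ball x 1))⁻¹ := by
          congr 1
          rw [hpow, mul_one, Real.exp_add]
          ring
  refine ⟨part1, ?_⟩
  -- key off-diagonal on-diagonal-type bound with m(y,1)
  set C₁ : ℝ := α * a * Real.exp (a + γ) * Real.exp ((a + N)^2 / (4*β)) with hC₁def
  have hC₁ : 0 < C₁ := by positivity
  have hkey : ∀ s : ℝ, 0 < s → s < 1 → ∀ x y : X,
      p s x y ≤ ENNReal.ofReal (C₁ * s ^ (-(N/2))) * (μ (ball y 1))⁻¹ := by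
    intro s hs0 hs1 x y
    have hst : 0 < Real.sqrt s := Real.sqrt_pos.2 hs0
    have hst1 : Real.sqrt s < 1 := by
      nlinarith [Real.sq_sqrt hs0.le, Real.sqrt_nonneg s]
    set d : ℝ := dist x y with hd
    have hd0 : 0 ≤ d := dist_nonneg
    have hR : Real.sqrt s < 1 + d := by linarith
    have hsubset : ball y 1 ⊆ ball x (1 + d) := by
      intro z hz
      rw [mem_ball] at hz ⊢
      have := dist_triangle z y x
      have : dist z x ≤ dist z y + d := by
        rw [hd, dist_comm x y]; linarith [dist_triangle z y x]
      linarith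
    have hVD2 := hVD x (Real.sqrt s) (1 + d) hst hR
    have hmono : μ (ball y 1) ≤
        ENNReal.ofReal (a * Real.exp (a * (1 + d)) * ((1 + d) / Real.sqrt s) ^ N) *
          μ (ball x (Real.sqrt s)) :=
      le_trans (measure_mono hsubset) hVD2
    have hcpos : (0:ℝ) < a * Real.exp (a * (1 + d)) * ((1 + d) / Real.sqrt s) ^ N := by
      have := Real.rpow_pos_of_pos (by positivity : (0:ℝ) < (1 + d) / Real.sqrt s) N
      positivity
    have hinv : (μ (ball x (Real.sqrt s)))⁻¹ ≤
        ENNReal.ofReal (a * Real.exp (a * (1 + d)) * ((1 + d) / Real.sqrt s) ^ N) *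
          (μ (ball y 1))⁻¹ :=
      aux_inv_le_of_le_mul (ENNReal.ofReal_pos.2 hcpos).ne' ENNReal.ofReal_ne_top hmono
    -- the real-number inequality
    have hu : (0:ℝ) < s ^ (-(N/2)) := Real.rpow_pos_of_pos hs0 _
    have hdivpow : ((1 + d) / Real.sqrt s) ^ N = (1 + d) ^ N * s ^ (-(N/2)) := by
      rw [Real.div_rpow (by positivity) (Real.sqrt_nonneg s), div_eq_mul_inv,
        Real.sqrt_eq_rpow, ← Real.rpow_mul hs0.le, ← Real.rpow_neg hs0.le,
        show -((1:ℝ)/2 * N) = -(N/2) by ring]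
    have hreal : α * (a * Real.exp (a * (1 + d)) * ((1 + d) / Real.sqrt s) ^ N) *
        (Real.exp (-β * d^2 / s) * Real.exp (γ * s)) ≤ C₁ * s ^ (-(N/2)) := by
      have h1 : (1 + d) ^ N ≤ Real.exp (d * N) := by
        calc (1 + d) ^ N ≤ Real.exp d ^ N := by
              apply Real.rpow_le_rpow (by positivity) _ (by linarith)
              linarith [Real.add_one_le_exp d]
          _ = Real.exp (d * N) := (Real.exp_mul d N).symm
      have h2 : Real.exp (-β * d^2 / s) ≤ Real.exp (-(β * d^2)) := by
        apply Real.exp_le_exp.2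
        rw [div_le_iff₀ hs0]
        nlinarith [mul_nonneg (mul_nonneg hβ.le (sq_nonneg d)) (sub_nonneg.2 hs1.le)]
      have h3 : Real.exp (γ * s) ≤ Real.exp γ := by
        apply Real.exp_le_exp.2; nlinarith
      have h4 : a * d + d * N - β * d^2 ≤ (a + N)^2 / (4*β) := by
        rw [le_div_iff₀ (by positivity)]
        nlinarith [sq_nonneg (2*β*d - (a + N))]
      have h5 : Real.exp (a * d) * (1 + d) ^ N * Real.exp (-β * d^2 / s) ≤
          Real.exp ((a + N)^2 / (4*β)) := by
        calc Real.exp (a * d) * (1 + d) ^ N * Real.exp (-β * d^2 / s)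
            ≤ Real.exp (a * d) * Real.exp (d * N) * Real.exp (-(β * d^2)) := by
              apply mul_le_mul _ h2 (Real.exp_pos _).le (by positivity)
              exact mul_le_mul_of_nonneg_left h1 (Real.exp_pos _).le
          _ = Real.exp (a * d + d * N - β * d^2) := by
              rw [← Real.exp_add, ← Real.exp_add]; ring_nf
          _ ≤ Real.exp ((a + N)^2 / (4*β)) := Real.exp_le_exp.2 h4
      calc α * (a * Real.exp (a * (1 + d)) * ((1 + d) / Real.sqrt s) ^ N) *
            (Real.exp (-β * d^2 / s) * Real.exp (γ * s))
          = (α * a * Real.exp a * s ^ (-(N/2))) *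
            ((Real.exp (a * d) * (1 + d) ^ N * Real.exp (-β * d^2 / s)) * Real.exp (γ * s)) := by
            rw [hdivpow, show a * (1 + d) = a + a * d by ring, Real.exp_add]
            ring
        _ ≤ (α * a * Real.exp a * s ^ (-(N/2))) *
            (Real.exp ((a + N)^2 / (4*β)) * Real.exp γ) := by
            apply mul_le_mul_of_nonneg_left _ (by positivity)
            exact mul_le_mul h5 h3 (Real.exp_pos _).le (Real.exp_pos _).le
        _ = C₁ * s ^ (-(N/2)) := by
            rw [hC₁def, Real.exp_add]; ring
    calc p s x y ≤ ENNReal.ofReal α * (μ (ball x (Real.sqrt s)))⁻¹ *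
          ENNReal.ofReal (Real.exp (-β * (dist x y)^2 / s) * Real.exp (γ * s)) :=
        hGUE s hs0 x y
      _ ≤ ENNReal.ofReal α *
          (ENNReal.ofReal (a * Real.exp (a * (1 + d)) * ((1 + d) / Real.sqrt s) ^ N) *
            (μ (ball y 1))⁻¹) *
          ENNReal.ofReal (Real.exp (-β * d^2 / s) * Real.exp (γ * s)) := by
            exact mul_le_mul' (mul_le_mul' le_rfl hinv) (by rw [hd])
      _ = (ENNReal.ofReal α *
            ENNReal.ofReal (a * Real.exp (a * (1 + d)) * ((1 + d) / Real.sqrt s) ^ N) *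
            ENNReal.ofReal (Real.exp (-β * d^2 / s) * Real.exp (γ * s))) *
            (μ (ball y 1))⁻¹ := by ring
      _ = ENNReal.ofReal (α * (a * Real.exp (a * (1 + d)) * ((1 + d) / Real.sqrt s) ^ N) *
            (Real.exp (-β * d^2 / s) * Real.exp (γ * s))) * (μ (ball y 1))⁻¹ := by
          rw [← ENNReal.ofReal_mul hα.le, ← ENNReal.ofReal_mul (by positivity)]
      _ ≤ ENNReal.ofReal (C₁ * s ^ (-(N/2))) * (μ (ball y 1))⁻¹ :=
          mul_le_mul_left (ENNReal.ofReal_le_ofReal hreal) _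
  -- Part 2
  set C : ℝ≥0∞ := ENNReal.ofReal (C₁ ^ (1/q)) with hCdef
  have hC0 : C ≠ 0 := (ENNReal.ofReal_pos.2 (Real.rpow_pos_of_pos hC₁ _)).ne'
  have hCtop : C ≠ ∞ := ENNReal.ofReal_ne_top
  have part2 : ∀ w : X → ℝ, Measurable w → ∀ t : ℝ, 0 < t → t < 1 →
      (⨆ x : X, ∫⁻ s in Ioc (0:ℝ) t, ∫⁻ y, p s x y * ENNReal.ofReal |w y| ∂μ)
        ≤ C * (∫⁻ s in Ioc (0:ℝ) t, ENNReal.ofReal (s ^ (-(N/(2*q))))) *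
          (∫⁻ y, (ENNReal.ofReal |w y|) ^ q * (μ (ball y 1))⁻¹ ∂μ) ^ (1/q) := by
    intro w hw t ht0 ht1
    set K : ℝ≥0∞ := ∫⁻ y, (ENNReal.ofReal |w y|) ^ q * (μ (ball y 1))⁻¹ ∂μ with hKdef
    -- pointwise in s and x
    have hinner : ∀ s : ℝ, 0 < s → s < 1 → ∀ x : X,
        (∫⁻ y, p s x y * ENNReal.ofReal |w y| ∂μ) ≤
          C * ENNReal.ofReal (s ^ (-(N/(2*q)))) * K ^ (1/q) := by
      intro s hs0 hs1 x
      have hpm : Measurable (fun y => p s x y) :=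
        (hpmeas s hs0).comp (measurable_prodMk_left)
      have hpq : (Real.conjExponent q).HolderConjugate q :=
        (Real.HolderConjugate.conjExponent hq1).symm
      set pc : ℝ := Real.conjExponent q with hpc
      have hf : AEMeasurable (fun y => (p s x y) ^ (1/pc : ℝ)) μ :=
        (hpm.pow measurable_const).aemeasurable
      have hg : AEMeasurable (fun y => (p s x y) ^ (1/q : ℝ) * ENNReal.ofReal |w y|) μ :=
        ((hpm.pow measurable_const).mul (hw.abs.ennreal_ofReal)).aemeasurable
      have hfg : ∀ y, p s x y * ENNReal.ofReal |w y| =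
          ((fun y => (p s x y) ^ (1/pc : ℝ)) *
           (fun y => (p s x y) ^ (1/q : ℝ) * ENNReal.ofReal |w y|)) y := by
        intro y
        simp only [Pi.mul_apply]
        rw [← mul_assoc, ← ENNReal.rpow_add_of_nonneg _ _ hpq.one_div_nonneg
          (by positivity)]
        rw [show (1/pc + 1/q : ℝ) = 1 by
          have := hpq.inv_add_inv_eq_one
          rw [one_div, one_div]; linarith]
        rw [ENNReal.rpow_one]
      have holder := ENNReal.lintegral_mul_le_Lp_mul_Lq μ hpq hf hg
      have hf2 : (∫⁻ y, ((p s x y) ^ (1/pc : ℝ)) ^ pc ∂μ) ^ (1/pc) ≤ 1 := by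
        have : ∀ y, ((p s x y) ^ (1/pc : ℝ)) ^ pc = p s x y := by
          intro y
          rw [← ENNReal.rpow_mul, one_div, inv_mul_cancel₀ hpq.ne_zero, ENNReal.rpow_one]
        simp only [this]
        calc (∫⁻ y, p s x y ∂μ) ^ (1/pc) ≤ (1:ℝ≥0∞) ^ (1/pc) :=
              ENNReal.rpow_le_rpow (hsub s hs0 x) hpq.one_div_nonneg
          _ = 1 := ENNReal.one_rpow _
      have hg2 : (∫⁻ y, ((p s x y) ^ (1/q : ℝ) * ENNReal.ofReal |w y|) ^ q ∂μ) ≤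
          ENNReal.ofReal (C₁ * s ^ (-(N/2))) * K := by
        have hexp : ∀ y, ((p s x y) ^ (1/q : ℝ) * ENNReal.ofReal |w y|) ^ q =
            p s x y * (ENNReal.ofReal |w y|) ^ q := by
          intro y
          rw [ENNReal.mul_rpow_of_nonneg _ _ hq0.le, ← ENNReal.rpow_mul,
            one_div, inv_mul_cancel₀ hq0.ne', ENNReal.rpow_one]
        simp only [hexp]
        calc (∫⁻ y, p s x y * (ENNReal.ofReal |w y|) ^ q ∂μ)
            ≤ ∫⁻ y, ENNReal.ofReal (C₁ * s ^ (-(N/2))) *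
                ((ENNReal.ofReal |w y|) ^ q * (μ (ball y 1))⁻¹) ∂μ := by
              apply lintegral_mono
              intro y
              calc p s x y * (ENNReal.ofReal |w y|) ^ q
                  ≤ (ENNReal.ofReal (C₁ * s ^ (-(N/2))) * (μ (ball y 1))⁻¹) *
                    (ENNReal.ofReal |w y|) ^ q :=
                    mul_le_mul_left (hkey s hs0 hs1 x y) _
                _ = ENNReal.ofReal (C₁ * s ^ (-(N/2))) *
                    ((ENNReal.ofReal |w y|) ^ q * (μ (ball y 1))⁻¹) := by ring
          _ = ENNReal.ofReal (C₁ * s ^ (-(N/2))) * K := by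
              rw [lintegral_const_mul' _ _ ENNReal.ofReal_ne_top]
        -- done
      have hKpow : (ENNReal.ofReal (C₁ * s ^ (-(N/2))) * K) ^ (1/q) =
          C * ENNReal.ofReal (s ^ (-(N/(2*q)))) * K ^ (1/q) := by
        rw [ENNReal.mul_rpow_of_nonneg _ _ (by positivity)]
        congr 1
        rw [ENNReal.ofReal_rpow_of_pos (by positivity),
          Real.mul_rpow hC₁.le (Real.rpow_pos_of_pos hs0 _).le,
          ← Real.rpow_mul hs0.le]
        rw [show (-(N/2)) * (1/q) = -(N/(2*q)) by ring]
        rw [ENNReal.ofReal_mul (by positivity)]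
      calc (∫⁻ y, p s x y * ENNReal.ofReal |w y| ∂μ)
          = ∫⁻ y, ((fun y => (p s x y) ^ (1/pc : ℝ)) *
              (fun y => (p s x y) ^ (1/q : ℝ) * ENNReal.ofReal |w y|)) y ∂μ := by
            simp only [← hfg]
        _ ≤ (∫⁻ y, ((p s x y) ^ (1/pc : ℝ)) ^ pc ∂μ) ^ (1/pc) *
            (∫⁻ y, ((p s x y) ^ (1/q : ℝ) * ENNReal.ofReal |w y|) ^ q ∂μ) ^ (1/q) := holder
        _ ≤ 1 * (ENNReal.ofReal (C₁ * s ^ (-(N/2))) * K) ^ (1/q) :=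
            mul_le_mul' hf2 (ENNReal.rpow_le_rpow hg2 (by positivity))
        _ = C * ENNReal.ofReal (s ^ (-(N/(2*q)))) * K ^ (1/q) := by
            rw [one_mul, hKpow]
    -- integrate in s and take sup in x
    refine iSup_le fun x => ?_
    have hmeasI : Measurable (fun s : ℝ => ENNReal.ofReal (s ^ (-(N/(2*q))))) :=
      (measurable_id.pow measurable_const).ennreal_ofReal
    calc (∫⁻ s in Ioc (0:ℝ) t, ∫⁻ y, p s x y * ENNReal.ofReal |w y| ∂μ)
        ≤ ∫⁻ s in Ioc (0:ℝ) t,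
            (C * K ^ (1/q)) * ENNReal.ofReal (s ^ (-(N/(2*q)))) := by
          apply lintegral_mono_ae
          filter_upwards [ae_restrict_mem measurableSet_Ioc] with s hs
          calc (∫⁻ y, p s x y * ENNReal.ofReal |w y| ∂μ)
              ≤ C * ENNReal.ofReal (s ^ (-(N/(2*q)))) * K ^ (1/q) :=
              hinner s hs.1 (lt_of_le_of_lt hs.2 ht1) x
            _ = (C * K ^ (1/q)) * ENNReal.ofReal (s ^ (-(N/(2*q)))) := by ring
      _ = (C * K ^ (1/q)) * ∫⁻ s in Ioc (0:ℝ) t, ENNReal.ofReal (s ^ (-(N/(2*q)))) :=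
          lintegral_const_mul _ hmeasI
      _ = C * (∫⁻ s in Ioc (0:ℝ) t, ENNReal.ofReal (s ^ (-(N/(2*q))))) * K ^ (1/q) := by
          ring
  refine ⟨⟨C, hC0, hCtop, part2⟩, ?_⟩
  -- Part 3
  intro w hw hK
  set K : ℝ≥0∞ := ∫⁻ y, (ENNReal.ofReal |w y|) ^ q * (μ (ball y 1))⁻¹ ∂μ with hKdef
  set r : ℝ := -(N/(2*q)) with hrdef
  have hr1 : (-1:ℝ) < r := by
    rw [hrdef, neg_lt, neg_neg]
    rw [div_lt_one (by positivity)]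
    linarith
  have hr1' : (0:ℝ) < r + 1 := by linarith
  set I : ℝ → ℝ≥0∞ := fun t => ∫⁻ s in Ioc (0:ℝ) t, ENNReal.ofReal (s ^ r) with hIdef
  have hIeq : ∀ t : ℝ, 0 < t → I t = ENNReal.ofReal (t ^ (r+1) / (r+1)) := by
    intro t ht
    have hint : IntegrableOn (fun s : ℝ => s ^ r) (Ioc 0 t) :=
      (intervalIntegral.intervalIntegrable_rpow' hr1 (a := 0) (b := t)).1
    have hnn : 0 ≤ᵐ[volume.restrict (Ioc (0:ℝ) t)] fun s : ℝ => s ^ r := by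
      filter_upwards [ae_restrict_mem measurableSet_Ioc] with s hs
      exact Real.rpow_nonneg hs.1.le _
    show (∫⁻ s in Ioc (0:ℝ) t, ENNReal.ofReal (s ^ r)) = _
    rw [← ofReal_integral_eq_lintegral_ofReal hint hnn]
    congr 1
    rw [← intervalIntegral.integral_of_le ht.le, integral_rpow (Or.inl hr1),
      Real.zero_rpow hr1'.ne', sub_zero]
  have htendI : Tendsto I (𝓝[>] (0:ℝ)) (𝓝 0) := by
    have hb : Tendsto (fun t : ℝ => t ^ (r+1)) (𝓝 0) (𝓝 0) := by
      have := (Real.continuousAt_rpow_const 0 (r+1) (Or.inr hr1'.le)).tendsto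
      rwa [Real.zero_rpow hr1'.ne'] at this
    have hb2 : Tendsto (fun t : ℝ => ENNReal.ofReal (t ^ (r+1) / (r+1)))
        (𝓝[>] (0:ℝ)) (𝓝 0) := by
      have h3 : Tendsto (fun t : ℝ => t ^ (r+1) / (r+1)) (𝓝[>] (0:ℝ)) (𝓝 0) := by
        have h4 : Tendsto (fun t : ℝ => t ^ (r+1)) (𝓝[>] (0:ℝ)) (𝓝 0) :=
          hb.mono_left nhdsWithin_le_nhds
        have := h4.div_const (r+1)
        simpa using this
      have := (ENNReal.continuous_ofReal.tendsto 0).comp h3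
      rwa [ENNReal.ofReal_zero] at this
    apply hb2.congr'
    filter_upwards [self_mem_nhdsWithin] with t ht
    exact (hIeq t ht).symm
  have hD : C * K ^ (1/q) ≠ ∞ :=
    ENNReal.mul_ne_top hCtop
      (ENNReal.rpow_lt_top_of_nonneg (by positivity) hK.ne).ne
  have hupper : ∀ᶠ t in 𝓝[>] (0:ℝ),
      (⨆ x : X, ∫⁻ s in Ioc (0:ℝ) t, ∫⁻ y, p s x y * ENNReal.ofReal |w y| ∂μ)
        ≤ (C * K ^ (1/q)) * I t := by
    filter_upwards [Ioo_mem_nhdsGT_of_mem (by exact ⟨le_refl (0:ℝ), one_pos⟩ :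
      (0:ℝ) ∈ Ico (0:ℝ) 1)] with t ht
    calc (⨆ x : X, ∫⁻ s in Ioc (0:ℝ) t, ∫⁻ y, p s x y * ENNReal.ofReal |w y| ∂μ)
        ≤ C * (∫⁻ s in Ioc (0:ℝ) t, ENNReal.ofReal (s ^ (-(N/(2*q))))) * K ^ (1/q) :=
          part2 w hw t ht.1 ht.2
      _ = (C * K ^ (1/q)) * I t := by rw [hIdef]; ring
  have hmul : Tendsto (fun t => (C * K ^ (1/q)) * I t) (𝓝[>] (0:ℝ)) (𝓝 0) := by
    have := ENNReal.Tendsto.const_mul htendI (Or.inr hD)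
    simpa using this
  exact tendsto_of_tendsto_of_tendsto_of_le_of_le' tendsto_const_nhds hmul
    (Eventually.of_forall fun t => zero_le) hupper
end
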